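/- Let (x, y) be a pair of unimodular complex sequences of length N forming a Golay complementary pair, and let a, b be complex sequences of length L. Define four L×N complex arrays by X₁[i,j] = a_i·x_j, X₂[i,j] = b_i·y_j, X₃[i,j] = −a_i·conj(y_{N-1-j}), and X₄[i,j] = b_i·conj(x_{N-1-j}). Then for all integer shifts τ₁, τ₂ with |τ₁| < L and |τ₂| < N, the sum ρ_{X₁}(τ₁,τ₂) + ρ_{X₂}(τ₁,τ₂) + ρ_{X₃}(τ₁,τ₂) + ρ_{X₄}(τ₁,τ₂) equals 2N·(ρ_a(τ₁) + ρ_b(τ₁)) if τ₂ = 0, and equals 0 if τ₂ ≠ 0. -/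

import Mathlib

open Finset

noncomputable section

/-- 1D aperiodic autocorrelation of a length-`N` complex sequence at integer shift `τ`:
`ρ_x(τ) = Σ x_j * conj (x_{j+τ})`, summed over all `j` with `j` and `j + τ` in `[0, N)`. -/
def acorr (N : ℕ) (x : ℕ → ℂ) (τ : ℤ) : ℂ :=
  ∑ j ∈ Finset.range N,
    if 0 ≤ (j : ℤ) + τ ∧ (j : ℤ) + τ < (N : ℤ) then
      x j * star (x ((j : ℤ) + τ).toNat)
    else 0

/-- 2D aperiodic autocorrelation of an `N₁ × N₂` complex array at integer shifts `(τ₁, τ₂)`. -/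
def acorr2 (N₁ N₂ : ℕ) (X : ℕ → ℕ → ℂ) (τ₁ τ₂ : ℤ) : ℂ :=
  ∑ i ∈ Finset.range N₁, ∑ j ∈ Finset.range N₂,
    if (0 ≤ (i : ℤ) + τ₁ ∧ (i : ℤ) + τ₁ < (N₁ : ℤ)) ∧
       (0 ≤ (j : ℤ) + τ₂ ∧ (j : ℤ) + τ₂ < (N₂ : ℤ)) then
      X i j * star (X ((i : ℤ) + τ₁).toNat ((j : ℤ) + τ₂).toNat)
    else 0

/-- Peak-to-mean envelope power ratio of a length-`L` complex sequence:
`sup_{t ∈ [0,1]} (1/L) * |Σ_{i<L} c_i exp(2π√-1 i t)|²`. -/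
def pmepr (L : ℕ) (c : ℕ → ℂ) : ℝ :=
  ⨆ t : Set.Icc (0 : ℝ) 1,
    (‖(∑ i ∈ Finset.range L,
      c i * Complex.exp (2 * Real.pi * Complex.I * (i : ℂ) * ((t : ℝ) : ℂ)))‖) ^ 2 / L

/-- The 2D autocorrelation of a separable array factors as a product of 1D autocorrelations. -/
lemma acorr2_mul (L N : ℕ) (c d : ℕ → ℂ) (τ₁ τ₂ : ℤ) :
    acorr2 L N (fun i j => c i * d j) τ₁ τ₂ = acorr L c τ₁ * acorr N d τ₂ := by
  rw [acorr2, acorr, acorr, Finset.sum_mul_sum]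
  refine Finset.sum_congr rfl fun i _ => Finset.sum_congr rfl fun j _ => ?_
  by_cases h₁ : 0 ≤ (i:ℤ)+τ₁ ∧ (i:ℤ)+τ₁ < L <;>
    by_cases h₂ : 0 ≤ (j:ℤ)+τ₂ ∧ (j:ℤ)+τ₂ < N <;>
      · simp [h₁, h₂, star_mul']
        try ring

/-- Negating an array does not change its 2D autocorrelation. -/
lemma acorr2_neg (L N : ℕ) (X : ℕ → ℕ → ℂ) (τ₁ τ₂ : ℤ) :
    acorr2 L N (fun i j => -(X i j)) τ₁ τ₂ = acorr2 L N X τ₁ τ₂ := by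
  simp [acorr2]

/-- The reversed-conjugated sequence has the same autocorrelation. -/
lemma acorr_revconj (N : ℕ) (y : ℕ → ℂ) (τ : ℤ) :
    acorr N (fun j => star (y (N - 1 - j))) τ = acorr N y τ := by
  unfold acorr
  rw [← Finset.sum_filter, ← Finset.sum_filter]
  refine Finset.sum_nbij' (fun j => ((N:ℤ) - 1 - j - τ).toNat)
    (fun j => ((N:ℤ) - 1 - j - τ).toNat) ?_ ?_ ?_ ?_ ?_
  · intro j hj
    simp only [Finset.mem_filter, Finset.mem_range] at hj ⊢
    omega
  · intro j hj
    simp only [Finset.mem_filter, Finset.mem_range] at hj ⊢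
    omega
  · intro j hj
    simp only [Finset.mem_filter, Finset.mem_range] at hj
    show ((((N:ℤ) - 1 - (((N:ℤ) - 1 - j - τ).toNat : ℤ) - τ).toNat) : ℕ) = j
    omega
  · intro j hj
    simp only [Finset.mem_filter, Finset.mem_range] at hj
    show ((((N:ℤ) - 1 - (((N:ℤ) - 1 - j - τ).toNat : ℤ) - τ).toNat) : ℕ) = j
    omega
  · intro j hj
    simp only [Finset.mem_filter, Finset.mem_range] at hj
    show star (y (N - 1 - j)) * star (star (y (N - 1 - ((j:ℤ) + τ).toNat))) =
      y (((N:ℤ) - 1 - j - τ).toNat) * star (y (((((N:ℤ) - 1 - j - τ).toNat : ℤ)) + τ).toNat)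
    have e1 : (((((N:ℤ) - 1 - j - τ).toNat : ℤ)) + τ).toNat = N - 1 - j := by omega
    have e2 : N - 1 - ((j:ℤ) + τ).toNat = (((N:ℤ) - 1 - j - τ).toNat : ℕ) := by omega
    rw [e1, e2, star_star]
    ring

/-- At zero shift, the autocorrelation of a unimodular sequence equals its length. -/
lemma acorr_self_zero (N : ℕ) (x : ℕ → ℂ) (hx : ∀ j < N, ‖x j‖ = 1) :
    acorr N x 0 = N := by
  unfold acorr
  have h : ∀ j ∈ Finset.range N,
      (if 0 ≤ (j : ℤ) + 0 ∧ (j : ℤ) + 0 < (N : ℤ) then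
        x j * star (x ((j : ℤ) + 0).toNat) else 0) = 1 := by
    intro j hj
    simp only [Finset.mem_range] at hj
    have hc : 0 ≤ (j : ℤ) + 0 ∧ (j : ℤ) + 0 < (N : ℤ) := by omega
    have ht : ((j : ℤ) + 0).toNat = j := by omega
    rw [if_pos hc, ht, Complex.star_def, Complex.mul_conj]
    norm_cast
    rw [Complex.normSq_eq_norm_sq, hx j hj]; norm_num
  rw [Finset.sum_congr rfl h, Finset.sum_const, Finset.card_range]
  simp

/-- for a unimodular GCP `(x, y)` of length `N`, the sum of the four 2D
autocorrelations equals `2N (ρ_a(τ₁) + ρ_b(τ₁))` when `τ₂ = 0`, and `0` when `τ₂ ≠ 0`. -/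
theorem stmt_3 (L N : ℕ) (x y a b : ℕ → ℂ)
    (hx : ∀ j < N, ‖x j‖ = 1) (hy : ∀ j < N, ‖y j‖ = 1)
    (hGCP : ∀ τ : ℤ, 1 ≤ |τ| → |τ| ≤ (N : ℤ) - 1 → acorr N x τ + acorr N y τ = 0)
    (τ₁ τ₂ : ℤ) (h₁ : |τ₁| < (L : ℤ)) (h₂ : |τ₂| < (N : ℤ)) :
    acorr2 L N (fun i j => a i * x j) τ₁ τ₂ +
      acorr2 L N (fun i j => b i * y j) τ₁ τ₂ +
      acorr2 L N (fun i j => -(a i * star (y (N - 1 - j)))) τ₁ τ₂ +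
      acorr2 L N (fun i j => b i * star (x (N - 1 - j))) τ₁ τ₂ =
    if τ₂ = 0 then 2 * (N : ℂ) * (acorr L a τ₁ + acorr L b τ₁) else 0 := by
  rw [acorr2_neg L N (fun i j => a i * star (y (N - 1 - j))),
    acorr2_mul, acorr2_mul, acorr2_mul L N a (fun j => star (y (N - 1 - j))),
    acorr2_mul L N b (fun j => star (x (N - 1 - j))), acorr_revconj, acorr_revconj]
  by_cases h : τ₂ = 0
  · subst h
    rw [acorr_self_zero N x hx, acorr_self_zero N y hy, if_pos rfl]
    ring
  · rw [if_neg h]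
    have hg := hGCP τ₂ (by rcases abs_cases τ₂ with hc|hc <;> omega)
      (by rcases abs_cases τ₂ with hc|hc <;> omega)
    linear_combination (acorr L a τ₁ + acorr L b τ₁) * hg

end
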